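/- Let A_1, …, A_k and B_1, …, B_l be finite abelian groups, let φ : A_1 × ⋯ × A_k → ℝ/ℤ and ψ : B_1 × ⋯ × B_l → ℝ/ℤ be multilinear maps, and suppose φ factors through ψ. Then for each index i ∈ {1,…,l}, bias(φ) ≥ 1 − ∏_{j ≠ i} (1 − 1/|B_j|). -/

import Mathlib

open scoped ComplexOrder

/-- A map of (dependent) products of abelian groups is multiadditive (multilinear over ℤ)
if it is additive in each coordinate separately. -/
def IsMultiadditive {ι : Type} [DecidableEq ι] {A : ι → Type} [∀ i, AddCommGroup (A i)]
    {B : Type} [AddCommMonoid B] (φ : (∀ i, A i) → B) : Prop :=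
  ∀ (i : ι) (x : ∀ j, A j) (a b : A i),
    φ (Function.update x i (a + b)) = φ (Function.update x i a) + φ (Function.update x i b)

/-- The standard character `e(x) = exp(2πix)` of `ℝ/ℤ`. -/
noncomputable def eChar (x : AddCircle (1 : ℝ)) : ℂ := AddCircle.toCircle x

/-- The bias of a map `A_1 × ⋯ × A_k → ℝ/ℤ`. -/
noncomputable def bias {ι : Type} [Fintype ι] [DecidableEq ι] {A : ι → Type}
    [∀ i, Fintype (A i)] (φ : (∀ i, A i) → AddCircle (1 : ℝ)) : ℂ :=
  (∑ x : ∀ i, A i, eChar (φ x)) / (Fintype.card (∀ i, A i) : ℂ)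

/-- The bilinear map `m_q : ℤ/q × ℤ/q → ℝ/ℤ`, `(x, y) ↦ xy/q mod 1`. -/
noncomputable def mq (q : ℕ) (x y : ZMod q) : AddCircle (1 : ℝ) :=
  (((x.val * y.val : ℕ) : ℝ) / q : ℝ)

/-- A multilinear map `φ : A_1 × ⋯ × A_k → ℝ/ℤ` factors through `m_q` if
`φ(x) = m_q(φ₁(x_I), φ₂(x_{I^c}))` for some `I` with `0 < |I| < k` and multilinear `φ₁, φ₂`. -/
def FactorsThroughMq {ι : Type} [Fintype ι] [DecidableEq ι] {A : ι → Type}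
    [∀ i, AddCommGroup (A i)] (q : ℕ) (φ : (∀ i, A i) → AddCircle (1 : ℝ)) : Prop :=
  ∃ I : Finset ι, I.Nonempty ∧ I ≠ Finset.univ ∧
    ∃ (φ₁ : (∀ i : I, A i) → ZMod q) (φ₂ : (∀ i : (Iᶜ : Finset ι), A i) → ZMod q),
      IsMultiadditive φ₁ ∧ IsMultiadditive φ₂ ∧
      ∀ x : ∀ i, A i, φ x = mq q (φ₁ (fun i => x i)) (φ₂ (fun i => x i))

/-- `φ` factors through `ψ` if there is a partition `[k] = I_1 ∪ ⋯ ∪ I_l` into nonempty sets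
and multilinear maps `φ_j : ∏_{i ∈ I_j} A_i → B_j` with
`φ(x) = ψ(φ_1(x_{I_1}), …, φ_l(x_{I_l}))`. -/
def FactorsThrough' {k l : ℕ} {A : Fin k → Type} [∀ i, AddCommGroup (A i)]
    {B : Fin l → Type} [∀ j, AddCommGroup (B j)]
    (φ : (∀ i, A i) → AddCircle (1 : ℝ)) (ψ : (∀ j, B j) → AddCircle (1 : ℝ)) : Prop :=
  ∃ P : Fin l → Finset (Fin k),
    (∀ j, (P j).Nonempty) ∧
    (∀ j j', j ≠ j' → Disjoint (P j) (P j')) ∧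
    (∀ i : Fin k, ∃ j, i ∈ P j) ∧
    ∃ φj : ∀ j, (∀ i : P j, A i) → B j,
      (∀ j, IsMultiadditive (φj j)) ∧
      ∀ x : ∀ i, A i, φ x = ψ (fun j => φj j (fun i => x i))



lemma eChar_zero : eChar 0 = 1 := by simp [eChar]

lemma eChar_add (x y : AddCircle (1 : ℝ)) : eChar (x + y) = eChar x * eChar y := by
  simp [eChar, AddCircle.toCircle_add]

lemma eChar_eq_one {x : AddCircle (1 : ℝ)} (h : eChar x = 1) : x = 0 := by
  have h1 : AddCircle.toCircle x = 1 := by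
    have : ((AddCircle.toCircle x : Circle) : ℂ) = ((1 : Circle) : ℂ) := by simpa [eChar] using h
    exact Subtype.coe_injective this
  have := AddCircle.injective_toCircle (T := (1:ℝ)) one_ne_zero
  have h2 : AddCircle.toCircle x = AddCircle.toCircle (0 : AddCircle (1:ℝ)) := by
    rw [h1, AddCircle.toCircle_zero (T := (1:ℝ))]
  exact this h2

lemma sum_eChar_nonneg {G : Type} [AddCommGroup G] [Fintype G] (h : G → AddCircle (1 : ℝ))
    (hh : ∀ a b : G, h (a + b) = h a + h b) : 0 ≤ ∑ a : G, eChar (h a) := by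
  by_cases htriv : ∀ a, h a = 0
  · have : ∑ a : G, eChar (h a) = (Fintype.card G : ℂ) := by
      simp [htriv, eChar_zero]
    rw [this]
    exact_mod_cast Complex.zero_le_real.mpr (by positivity : (0:ℝ) ≤ (Fintype.card G : ℝ))
  · push_neg at htriv
    obtain ⟨a0, ha0⟩ := htriv
    have key : ∑ a : G, eChar (h a) = eChar (h a0) * ∑ a : G, eChar (h a) := by
      calc ∑ a : G, eChar (h a) = ∑ a : G, eChar (h (a0 + a)) :=
            (Equiv.sum_comp (Equiv.addLeft a0) (fun a => eChar (h a))).symm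
        _ = ∑ a : G, eChar (h a0) * eChar (h a) := by
            simp_rw [hh, eChar_add]
        _ = eChar (h a0) * ∑ a : G, eChar (h a) := by rw [Finset.mul_sum]
    have hne : eChar (h a0) ≠ 1 := fun hc => ha0 (eChar_eq_one hc)
    have : (eChar (h a0) - 1) * ∑ a : G, eChar (h a) = 0 := by linear_combination -key
    have hz : ∑ a : G, eChar (h a) = 0 := by
      rcases mul_eq_zero.mp this with h' | h'
      · exact absurd (by linear_combination h' : eChar (h a0) = 1) hne
      · exact h'
    rw [hz]



/-- A multiadditive map vanishes if one input coordinate is zero. -/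
lemma multi_zero_coord {ι : Type} [DecidableEq ι] {A : ι → Type} [∀ i, AddCommGroup (A i)]
    {B : Type} [AddCommGroup B] (φ : (∀ i, A i) → B) (hφ : IsMultiadditive φ)
    (j : ι) (x : ∀ i, A i) (hx : x j = 0) : φ x = 0 := by
  have h := hφ j x 0 0
  rw [add_zero] at h
  have hx' : Function.update x j 0 = x := by rw [← hx, Function.update_eq_self]
  rw [hx'] at h
  exact (right_eq_add.mp h)

/-- `piSplitAt.symm` expressed via `Function.update`. -/
lemma piSplitAt_symm_update {κ : Type} [DecidableEq κ] {C : κ → Type} (c : κ)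
    (a a' : C c) (r : ∀ j : {j // j ≠ c}, C j) :
    (Equiv.piSplitAt c C).symm (a, r)
      = Function.update ((Equiv.piSplitAt c C).symm (a', r)) c a := by
  funext j
  rcases eq_or_ne j c with rfl | h
  · simp [Equiv.piSplitAt]
  · simp [Equiv.piSplitAt, h, Function.update_of_ne h]

/-- fiber counting for additive maps -/
lemma count_zero_hom {G B : Type} [AddCommGroup G] [Fintype G] [AddCommGroup B] [DecidableEq B]
    [Fintype B] (h : G → B) (hh : ∀ a b : G, h (a + b) = h a + h b) :
    Fintype.card G ≤ (Finset.univ.filter (fun a => h a = 0)).card * Fintype.card B := by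
  classical
  have h0 : h 0 = 0 := by
    have := hh 0 0; rw [add_zero] at this; exact (right_eq_add.mp this)
  have hsub : ∀ a b : G, h (a - b) = h a - h b := by
    intro a b
    have hneg : h (-b) = - h b := by
      have h2 := hh b (-b); rw [add_neg_cancel, h0] at h2
      exact (neg_eq_of_add_eq_zero_right h2.symm).symm
    rw [sub_eq_add_neg, hh, hneg, sub_eq_add_neg]
  have hcard : Fintype.card G = ∑ b : B, (Finset.univ.filter (fun a => h a = b)).card := by
    simpa using Finset.card_eq_sum_card_fiberwise (fun a (_ : a ∈ Finset.univ) => Finset.mem_univ (h a))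
  have hfib : ∀ b : B, (Finset.univ.filter (fun a => h a = b)).card
      ≤ (Finset.univ.filter (fun a => h a = 0)).card := by
    intro b
    rcases (Finset.univ.filter (fun a => h a = b)).eq_empty_or_nonempty with he | ⟨a0, ha0⟩
    · simp [he]
    · have ha0' : h a0 = b := (Finset.mem_filter.mp ha0).2
      apply Finset.card_le_card_of_injOn (fun a => a - a0)
      · intro a ha
        have : h a = b := (Finset.mem_filter.mp ha).2
        simp [hsub, this, ha0']
      · intro x _ y _ hxy
        simpa using sub_left_injective hxy
  calc Fintype.card G = ∑ b : B, (Finset.univ.filter (fun a => h a = b)).card := hcard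
    _ ≤ ∑ _b : B, (Finset.univ.filter (fun a => h a = 0)).card := Finset.sum_le_sum (fun b _ => hfib b)
    _ = (Finset.univ.filter (fun a => h a = 0)).card * Fintype.card B := by
        simp [Finset.sum_const, Nat.mul_comm]

lemma slice_additive {κ : Type} [DecidableEq κ] {C : κ → Type} [∀ i, AddCommGroup (C i)]
    {B : Type} [AddCommMonoid B] (c : κ) (f : (∀ i, C i) → B)
    (hf : ∀ (x : ∀ j, C j) (a b : C c),
      f (Function.update x c (a + b)) = f (Function.update x c a) + f (Function.update x c b))
    (r : ∀ j : {j // j ≠ c}, C j) (a b : C c) :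
    f ((Equiv.piSplitAt c C).symm (a + b, r))
      = f ((Equiv.piSplitAt c C).symm (a, r)) + f ((Equiv.piSplitAt c C).symm (b, r)) := by
  rw [piSplitAt_symm_update c (a+b) a r, hf, ← piSplitAt_symm_update, ← piSplitAt_symm_update]

lemma sum_eChar_multi_nonneg {κ : Type} [Fintype κ] [DecidableEq κ] {C : κ → Type}
    [∀ i, AddCommGroup (C i)] [∀ i, Fintype (C i)] (c : κ)
    (f : (∀ i, C i) → AddCircle (1 : ℝ))
    (hf : ∀ (x : ∀ j, C j) (a b : C c),
      f (Function.update x c (a + b)) = f (Function.update x c a) + f (Function.update x c b)) :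
    0 ≤ ∑ x : ∀ i, C i, eChar (f x) := by
  rw [← Equiv.sum_comp (Equiv.piSplitAt c C).symm (fun x => eChar (f x)),
    Fintype.sum_prod_type, Finset.sum_comm]
  apply Finset.sum_nonneg
  intro r _
  exact sum_eChar_nonneg (fun a => f ((Equiv.piSplitAt c C).symm (a, r)))
    (fun a b => slice_additive c f hf r a b)

lemma count_zero_multi {κ : Type} [Fintype κ] [DecidableEq κ] {C : κ → Type}
    [∀ i, AddCommGroup (C i)] [∀ i, Fintype (C i)] {B : Type} [AddCommGroup B] [Fintype B]
    [DecidableEq B] (c : κ) (f : (∀ i, C i) → B)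
    (hf : ∀ (x : ∀ j, C j) (a b : C c),
      f (Function.update x c (a + b)) = f (Function.update x c a) + f (Function.update x c b)) :
    Fintype.card (∀ i, C i) ≤ (Finset.univ.filter (fun x => f x = 0)).card * Fintype.card B := by
  classical
  have hcount : (Finset.univ.filter (fun x : ∀ i, C i => f x = 0)).card
      = ∑ r : ∀ j : {j // j ≠ c}, C j, (Finset.univ.filter
          (fun a : C c => f ((Equiv.piSplitAt c C).symm (a, r)) = 0)).card := by
    rw [Finset.card_filter,
      ← Equiv.sum_comp (Equiv.piSplitAt c C).symm (fun x => if f x = 0 then 1 else 0),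
      Fintype.sum_prod_type, Finset.sum_comm]
    exact Finset.sum_congr rfl fun r _ => (Finset.card_filter _ _).symm
  have hcardeq : Fintype.card (∀ i, C i)
      = ∑ _r : ∀ j : {j // j ≠ c}, C j, Fintype.card (C c) := by
    rw [Fintype.card_congr (Equiv.piSplitAt c C), Fintype.card_prod, Finset.sum_const,
      smul_eq_mul, mul_comm]
    rfl
  rw [hcount, hcardeq, Finset.sum_mul]
  apply Finset.sum_le_sum
  intro r _
  exact count_zero_hom (fun a => f ((Equiv.piSplitAt c C).symm (a, r)))
    (fun a b => slice_additive c f hf r a b)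

lemma key_ineq {l : ℕ} (i : Fin l) {T : Fin l → Type} [∀ j, AddCommGroup (T j)]
    [∀ j, Fintype (T j)] {B : Fin l → Type} [∀ j, AddCommGroup (B j)] [∀ j, Fintype (B j)]
    [∀ j, DecidableEq (B j)]
    (ψ : (∀ j, B j) → AddCircle (1 : ℝ)) (hψ : IsMultiadditive ψ)
    (F : ∀ j, T j → B j)
    (hnn : ∀ h : B i → AddCircle (1 : ℝ), (∀ a b, h (a + b) = h a + h b) →
      0 ≤ ∑ t : T i, eChar (h (F i t)))
    (hcnt : ∀ j : Fin l, j ≠ i →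
      Fintype.card (T j) ≤ (Finset.univ.filter (fun z : T j => F j z = 0)).card
        * Fintype.card (B j)) :
    ((1 - ∏ j ∈ Finset.univ.erase i, (1 - 1 / (Fintype.card (B j) : ℝ)) : ℝ) : ℂ)
      ≤ (∑ y : ∀ j, T j, eChar (ψ (fun j => F j (y j)))) / (Fintype.card (∀ j, T j) : ℂ) := by
  classical
  have hval_i : ∀ (a : T i) (r : ∀ j : {j // j ≠ i}, T j),
      ((Equiv.piSplitAt i T).symm (a, r)) i = a := by
    intro a r; simp [Equiv.piSplitAt]
  have hval_ne : ∀ (a : T i) (r : ∀ j : {j // j ≠ i}, T j) (j : Fin l) (hj : j ≠ i),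
      ((Equiv.piSplitAt i T).symm (a, r)) j = r ⟨j, hj⟩ := by
    intro a r j hj; simp [Equiv.piSplitAt, hj]
  have hupd : ∀ (r : ∀ j : {j // j ≠ i}, T j) (t t' : T i),
      (fun j => F j (((Equiv.piSplitAt i T).symm (t, r)) j))
        = Function.update (fun j => F j (((Equiv.piSplitAt i T).symm (t', r)) j)) i (F i t) := by
    intro r t t'
    funext j
    rcases eq_or_ne j i with rfl | hji
    · rw [Function.update_self, hval_i]
    · rw [Function.update_of_ne hji, hval_ne t r j hji, hval_ne t' r j hji]
  -- nonnegativity of each slice sum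
  have hsum_r : ∀ r : ∀ j : {j // j ≠ i}, T j,
      0 ≤ ∑ a : T i, eChar (ψ (fun j => F j (((Equiv.piSplitAt i T).symm (a, r)) j))) := by
    intro r
    have hadd : ∀ b b' : B i,
        ψ (Function.update (fun j => F j (((Equiv.piSplitAt i T).symm ((0 : T i), r)) j)) i (b + b'))
        = ψ (Function.update (fun j => F j (((Equiv.piSplitAt i T).symm ((0 : T i), r)) j)) i b)
        + ψ (Function.update (fun j => F j (((Equiv.piSplitAt i T).symm ((0 : T i), r)) j)) i b') :=
      fun b b' => hψ i _ b b'
    have hrw : ∀ a : T i, ψ (fun j => F j (((Equiv.piSplitAt i T).symm (a, r)) j))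
        = ψ (Function.update (fun j => F j (((Equiv.piSplitAt i T).symm ((0 : T i), r)) j)) i
            (F i a)) := by
      intro a; rw [hupd r a 0]
    simp only [hrw]
    exact hnn (fun b => ψ (Function.update
      (fun j => F j (((Equiv.piSplitAt i T).symm ((0 : T i), r)) j)) i b)) hadd
  -- value of a slice sum when some off-i block hits zero
  have hsum_good : ∀ r : ∀ j : {j // j ≠ i}, T j,
      (∃ (j : Fin l) (hj : j ≠ i), F j (r ⟨j, hj⟩) = 0) →
      ∑ a : T i, eChar (ψ (fun j => F j (((Equiv.piSplitAt i T).symm (a, r)) j)))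
        = (Fintype.card (T i) : ℂ) := by
    rintro r ⟨j0, hj0, hz⟩
    have h1 : ∀ a : T i, ψ (fun j => F j (((Equiv.piSplitAt i T).symm (a, r)) j)) = 0 := by
      intro a
      apply multi_zero_coord ψ hψ j0
      show F j0 (((Equiv.piSplitAt i T).symm (a, r)) j0) = 0
      rw [hval_ne a r j0 hj0]
      exact hz
    calc ∑ a : T i, eChar (ψ (fun j => F j (((Equiv.piSplitAt i T).symm (a, r)) j)))
        = ∑ _a : T i, (1:ℂ) := Finset.sum_congr rfl (fun a _ => by rw [h1 a, eChar_zero])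
      _ = (Fintype.card (T i) : ℂ) := by simp
  -- split the full sum
  have hsplit : ∑ y : ∀ j, T j, eChar (ψ (fun j => F j (y j)))
      = ∑ r : ∀ j : {j // j ≠ i}, T j, ∑ a : T i,
          eChar (ψ (fun j => F j (((Equiv.piSplitAt i T).symm (a, r)) j))) := by
    rw [← Equiv.sum_comp (Equiv.piSplitAt i T).symm
        (fun y => eChar (ψ (fun j => F j (y j)))), Fintype.sum_prod_type, Finset.sum_comm]
  -- lower bound on the full sum
  have hlow : (((Finset.univ.filter (fun r : ∀ j : {j // j ≠ i}, T j =>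
        ∃ (j : Fin l) (hj : j ≠ i), F j (r ⟨j, hj⟩) = 0)).card * Fintype.card (T i) : ℕ) : ℂ)
      ≤ ∑ y : ∀ j, T j, eChar (ψ (fun j => F j (y j))) := by
    rw [hsplit]
    have hterm : ∀ r ∈ (Finset.univ : Finset (∀ j : {j // j ≠ i}, T j)),
        (if ∃ (j : Fin l) (hj : j ≠ i), F j (r ⟨j, hj⟩) = 0
          then (Fintype.card (T i) : ℂ) else 0)
          ≤ ∑ a : T i, eChar (ψ (fun j => F j (((Equiv.piSplitAt i T).symm (a, r)) j))) := by
      intro r _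
      by_cases hr : ∃ (j : Fin l) (hj : j ≠ i), F j (r ⟨j, hj⟩) = 0
      · rw [if_pos hr, hsum_good r hr]
      · rw [if_neg hr]; exact hsum_r r
    refine le_trans (le_of_eq ?_) (Finset.sum_le_sum hterm)
    rw [← Finset.sum_filter, Finset.sum_const, nsmul_eq_mul]
    push_cast
    ring
  -- counting the bad set
  have hcnt_bad : (Finset.univ.filter (fun r : ∀ j : {j // j ≠ i}, T j =>
      ¬ ∃ (j : Fin l) (hj : j ≠ i), F j (r ⟨j, hj⟩) = 0)).card
      = ∏ js : {j // j ≠ i},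
          (Finset.univ.filter (fun z : T js.val => ¬ F js.val z = 0)).card := by
    rw [← Fintype.card_piFinset]
    congr 1
    ext r
    simp only [Finset.mem_filter, Finset.mem_univ, true_and, Fintype.mem_piFinset, not_exists]
    constructor
    · intro h js; exact h js.1 js.2
    · intro h j hj; exact h ⟨j, hj⟩
  -- per-block bound
  have hperj : ∀ js : {j // j ≠ i},
      ((Finset.univ.filter (fun z : T js.val => ¬ F js.val z = 0)).card : ℝ)
        ≤ (Fintype.card (T js.val) : ℝ) * (1 - 1 / (Fintype.card (B js.val) : ℝ)) := by
    intro js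
    have hz := hcnt js.val js.2
    have hsplitc : (Finset.univ.filter (fun z : T js.val => F js.val z = 0)).card
        + (Finset.univ.filter (fun z : T js.val => ¬ F js.val z = 0)).card
        = Fintype.card (T js.val) := by
      rw [Finset.card_filter_add_card_filter_not, Finset.card_univ]
    have hb : (0:ℝ) < (Fintype.card (B js.val) : ℝ) := by
      exact_mod_cast Fintype.card_pos
    have hzr : (Fintype.card (T js.val) : ℝ)
        ≤ ((Finset.univ.filter (fun z : T js.val => F js.val z = 0)).card : ℝ)
          * (Fintype.card (B js.val) : ℝ) := by exact_mod_cast hz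
    have h1 : (Fintype.card (T js.val) : ℝ) / (Fintype.card (B js.val) : ℝ)
        ≤ ((Finset.univ.filter (fun z : T js.val => F js.val z = 0)).card : ℝ) :=
      (div_le_iff₀ hb).mpr hzr
    have h2 : ((Finset.univ.filter (fun z : T js.val => F js.val z = 0)).card : ℝ)
        + ((Finset.univ.filter (fun z : T js.val => ¬ F js.val z = 0)).card : ℝ)
        = (Fintype.card (T js.val) : ℝ) := by exact_mod_cast hsplitc
    have h3 : (Fintype.card (T js.val) : ℝ) * (1 - 1 / (Fintype.card (B js.val) : ℝ))
        = (Fintype.card (T js.val) : ℝ)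
          - (Fintype.card (T js.val) : ℝ) / (Fintype.card (B js.val) : ℝ) := by ring
    linarith
  -- bad count vs product bound
  have hbadle : ((Finset.univ.filter (fun r : ∀ j : {j // j ≠ i}, T j =>
      ¬ ∃ (j : Fin l) (hj : j ≠ i), F j (r ⟨j, hj⟩) = 0)).card : ℝ)
      ≤ (Fintype.card (∀ j : {j // j ≠ i}, T j) : ℝ)
        * ∏ j ∈ Finset.univ.erase i, (1 - 1 / (Fintype.card (B j) : ℝ)) := by
    have hps : ∏ j ∈ Finset.univ.erase i, (1 - 1 / (Fintype.card (B j) : ℝ))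
        = ∏ js : {j // j ≠ i}, (1 - 1 / (Fintype.card (B js.val) : ℝ)) :=
      Finset.prod_subtype _ (by simp) _
    rw [hcnt_bad, hps, Fintype.card_pi]
    push_cast
    rw [← Finset.prod_mul_distrib]
    exact Finset.prod_le_prod (fun js _ => Nat.cast_nonneg _) (fun js _ => hperj js)
  -- good + bad = all
  have hGB : (Finset.univ.filter (fun r : ∀ j : {j // j ≠ i}, T j =>
        ∃ (j : Fin l) (hj : j ≠ i), F j (r ⟨j, hj⟩) = 0)).card
      + (Finset.univ.filter (fun r : ∀ j : {j // j ≠ i}, T j =>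
        ¬ ∃ (j : Fin l) (hj : j ≠ i), F j (r ⟨j, hj⟩) = 0)).card
      = Fintype.card (∀ j : {j // j ≠ i}, T j) := by
    rw [Finset.card_filter_add_card_filter_not, Finset.card_univ]
  -- cards
  have hNcard : Fintype.card (∀ j, T j)
      = Fintype.card (T i) * Fintype.card (∀ j : {j // j ≠ i}, T j) := by
    rw [Fintype.card_congr (Equiv.piSplitAt i T), Fintype.card_prod]
  -- final assembly
  obtain ⟨hre, him⟩ := Complex.le_def.mp hlow
  simp only [Complex.natCast_re, Complex.natCast_im] at hre him
  rw [Complex.le_def]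
  have hNposn : 0 < Fintype.card (∀ j, T j) := Fintype.card_pos
  have hNpos : (0:ℝ) < (Fintype.card (∀ j, T j) : ℝ) := by exact_mod_cast hNposn
  constructor
  · rw [← Complex.ofReal_natCast (Fintype.card (∀ j, T j)), Complex.div_ofReal_re,
      Complex.ofReal_re, le_div_iff₀ hNpos]
    set G := (Finset.univ.filter (fun r : ∀ j : {j // j ≠ i}, T j =>
        ∃ (j : Fin l) (hj : j ≠ i), F j (r ⟨j, hj⟩) = 0)).card with hG
    set Bd := (Finset.univ.filter (fun r : ∀ j : {j // j ≠ i}, T j =>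
        ¬ ∃ (j : Fin l) (hj : j ≠ i), F j (r ⟨j, hj⟩) = 0)).card with hBd
    set Rc := Fintype.card (∀ j : {j // j ≠ i}, T j) with hRc
    set M := Fintype.card (T i) with hM
    set p := ∏ j ∈ Finset.univ.erase i, (1 - 1 / (Fintype.card (B j) : ℝ)) with hpdef
    have hre' : ((G : ℝ) * M) ≤ (∑ y : ∀ j, T j, eChar (ψ (fun j => F j (y j)))).re := by
      have := hre; push_cast at this ⊢; linarith
    have hGBr : (G : ℝ) + (Bd : ℝ) = (Rc : ℝ) := by exact_mod_cast hGB
    have hNr : (Fintype.card (∀ j, T j) : ℝ) = (M : ℝ) * (Rc : ℝ) := by exact_mod_cast hNcard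
    have hbadr : (Bd : ℝ) ≤ (Rc : ℝ) * p := hbadle
    have hfin : (0:ℝ) ≤ (M : ℝ) * ((Rc : ℝ) * p - (Bd : ℝ)) :=
      mul_nonneg (Nat.cast_nonneg _) (by linarith)
    rw [hNr]
    nlinarith [hfin, hre', hGBr]
  · rw [← Complex.ofReal_natCast (Fintype.card (∀ j, T j)), Complex.div_ofReal_im,
      Complex.ofReal_im, ← him]
    simp

/-- If `φ : A_1 × ⋯ × A_k → ℝ/ℤ` and `ψ : B_1 × ⋯ × B_l → ℝ/ℤ` are multilinear and `φ` factors
through `ψ`, then for each `i ∈ [l]`, `bias(φ) ≥ 1 − ∏_{j ≠ i} (1 − 1/|B_j|)`. -/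
theorem bias_ge_one_sub_prod_of_factorsThrough (k l : ℕ)
    (A : Fin k → Type) [∀ i, AddCommGroup (A i)] [∀ i, Fintype (A i)]
    (B : Fin l → Type) [∀ j, AddCommGroup (B j)] [∀ j, Fintype (B j)]
    (φ : (∀ i, A i) → AddCircle (1 : ℝ)) (ψ : (∀ j, B j) → AddCircle (1 : ℝ))
    (hφ : IsMultiadditive φ) (hψ : IsMultiadditive ψ)
    (hfac : FactorsThrough' φ ψ) (i : Fin l) :
    ((1 - ∏ j ∈ Finset.univ.erase i, (1 - 1 / (Fintype.card (B j) : ℝ)) : ℝ) : ℂ) ≤ bias φ := by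
  classical
  obtain ⟨P, hPne, hPdisj, hPcov, φj, hφj, hfaceq⟩ := hfac
  have huniq : ∀ {a : Fin k} {j j' : Fin l}, a ∈ P j → a ∈ P j' → j = j' := by
    intro a j j' h h'
    by_contra hne
    exact absurd h' (Finset.disjoint_left.mp (hPdisj j j' hne) h)
  have hbij : Function.Bijective
      (fun (x : ∀ i, A i) (j : Fin l) (i' : P j) => x i'.val) := by
    constructor
    · intro x x' hxx
      funext a
      obtain ⟨j, hj⟩ := hPcov a
      exact congrFun (congrFun hxx j) ⟨a, hj⟩
    · intro y
      refine ⟨fun a => y (hPcov a).choose ⟨a, (hPcov a).choose_spec⟩, ?_⟩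
      funext j a
      obtain ⟨a, ha⟩ := a
      have hj : (hPcov a).choose = j := huniq (hPcov a).choose_spec ha
      subst hj
      rfl
  have hsum1 : ∑ x : ∀ i, A i, eChar (φ x)
      = ∑ y : ∀ j, (∀ i' : P j, A i'.val), eChar (ψ (fun j => φj j (y j))) := by
    rw [← Function.Bijective.sum_comp hbij (fun y => eChar (ψ (fun j => φj j (y j))))]
    exact Finset.sum_congr rfl fun x _ => by rw [hfaceq x]
  have hcard1 : Fintype.card (∀ i, A i) = Fintype.card (∀ j, (∀ i' : P j, A i'.val)) :=
    Fintype.card_of_bijective hbij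
  have hbias : bias φ = (∑ y : ∀ j, (∀ i' : P j, A i'.val), eChar (ψ (fun j => φj j (y j))))
      / (Fintype.card (∀ j, (∀ i' : P j, A i'.val)) : ℂ) := by
    rw [bias, hsum1, hcard1]
  rw [hbias]
  apply key_ineq (T := fun j => (i' : P j) → A i'.val) i ψ hψ φj
  · intro h hadd
    obtain ⟨c0, hc0⟩ := hPne i
    apply sum_eChar_multi_nonneg (⟨c0, hc0⟩ : P i)
    intro x a b
    rw [hφj i ⟨c0, hc0⟩ x a b, hadd]
  · intro j hj
    obtain ⟨c0, hc0⟩ := hPne j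
    exact count_zero_multi (⟨c0, hc0⟩ : P j) (φj j) (fun x a b => hφj j ⟨c0, hc0⟩ x a b)
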